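/- Let X be a 2-based Banach space with natural parameterization r and half-length L, and let s ∈ ℝ be a point at which r is twice differentiable both at s and at s + L. If ρ₁, τ₁, ρ₂, τ₂ are the real numbers with r''(s) = −ρ₁·r(s) + τ₁·r'(s) and r''(s+L) = −ρ₂·r(s+L) + τ₂·r'(s+L), then ρ₂ = ρ₁ and τ₂ = τ₁. -/

import Mathlib

noncomputable section
open MeasureTheory Set Filter
open scoped ENNReal Topology

variable {X : Type*} [NormedAddCommGroup X] [NormedSpace ℝ X]

/-- `e^{it} = cos t • e₁ + sin t • e₂` for the basis `b 0, b 1`. -/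
def expV (b : Module.Basis (Fin 2) ℝ X) (t : ℝ) : X :=
  Real.cos t • b 0 + Real.sin t • b 1

/-- The polar parameterization `p(t) = e^{it}/‖e^{it}‖` of the unit sphere. -/
def polarParam (b : Module.Basis (Fin 2) ℝ X) (t : ℝ) : X :=
  ‖expV b t‖⁻¹ • expV b t

/-- The Euclidean norm `|x| = √(e₁*(x)² + e₂*(x)²)` associated to the basis. -/
def euclNorm (b : Module.Basis (Fin 2) ℝ X) (x : X) : ℝ :=
  Real.sqrt ((b.coord 0 x)^2 + (b.coord 1 x)^2)

/-- `c = min{‖x‖ : |x| = 1}`. -/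
def cConst (b : Module.Basis (Fin 2) ℝ X) : ℝ :=
  sInf (norm '' {x : X | euclNorm b x = 1})

/-- `C = max{‖x‖ : |x| = 1}`. -/
def CConst (b : Module.Basis (Fin 2) ℝ X) : ℝ :=
  sSup (norm '' {x : X | euclNorm b x = 1})

/-- The right derivative of a function `f : ℝ → X`. -/
def rightDeriv (f : ℝ → X) (t : ℝ) : X := derivWithin f (Ici t) t

/-- The left derivative of a function `f : ℝ → X`. -/
def leftDeriv (f : ℝ → X) (t : ℝ) : X := derivWithin f (Iic t) t

/-- The arc-length function `s(t) = ∫₀^t ‖p'₊(u)‖ du`. -/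
def arcLen (b : Module.Basis (Fin 2) ℝ X) (t : ℝ) : ℝ :=
  ∫ u in (0:ℝ)..t, ‖rightDeriv (polarParam b) u‖

/-- The half-length `L = s(π)` of the unit sphere. -/
def halfLen (b : Module.Basis (Fin 2) ℝ X) : ℝ := arcLen b Real.pi

/-- The inverse `t = s⁻¹` of the arc-length function. -/
def arcInv (b : Module.Basis (Fin 2) ℝ X) : ℝ → ℝ := Function.invFun (arcLen b)

/-- The natural parameterization `r = p ∘ t` of the unit sphere. -/
def natParam (b : Module.Basis (Fin 2) ℝ X) : ℝ → X := polarParam b ∘ arcInv b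

/-- Local absolute continuity of `f` with a.e. derivative `f'`, in the sense that `f` is
differentiable almost everywhere, `f'` is locally integrable, and `f` is recovered from `f'`
by integration. -/
def LocAC {E : Type*} [NormedAddCommGroup E] [NormedSpace ℝ E] [CompleteSpace E]
    (f f' : ℝ → E) : Prop :=
  (∀ᵐ t : ℝ, HasDerivAt f (f' t) t) ∧ LocallyIntegrable f' volume ∧
    ∀ a b : ℝ, a ≤ b → f b - f a = ∫ t in a..b, f' t

/-- `s` is a Lebesgue point of `g`. -/
def LebesguePoint {E : Type*} [NormedAddCommGroup E] (g : ℝ → E) (s : ℝ) : Prop :=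
  Tendsto (fun ε : ℝ => (1/ε) * ∫ t in (0:ℝ)..ε, ‖g (s + t) - g s‖) (𝓝[≠] (0:ℝ)) (𝓝 0)


-- ===== auxiliary lemmas =====
section Aux

variable (b : Module.Basis (Fin 2) ℝ X)

lemma expV_antiperiodic (t : ℝ) : expV b (t + Real.pi) = -expV b t := by
  simp only [expV, Real.cos_add_pi, Real.sin_add_pi, neg_smul, neg_add]

lemma coord_expV_zero (t : ℝ) : b.coord 0 (expV b t) = Real.cos t := by
  simp [expV]

lemma coord_expV_one (t : ℝ) : b.coord 1 (expV b t) = Real.sin t := by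
  simp [expV]

lemma expV_ne_zero (t : ℝ) : expV b t ≠ 0 := by
  intro h
  have h0 : Real.cos t = 0 := by
    have := coord_expV_zero b t; rw [h] at this; simpa using this.symm
  have h1 : Real.sin t = 0 := by
    have := coord_expV_one b t; rw [h] at this; simpa using this.symm
  have := Real.sin_sq_add_cos_sq t
  rw [h0, h1] at this; norm_num at this

lemma norm_expV_pos (t : ℝ) : 0 < ‖expV b t‖ := norm_pos_iff.2 (expV_ne_zero b t)

lemma norm_polarParam (t : ℝ) : ‖polarParam b t‖ = 1 := by
  rw [polarParam, norm_smul, norm_inv, norm_norm,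
    inv_mul_cancel₀ (norm_expV_pos b t).ne']

lemma polarParam_antiperiodic (t : ℝ) : polarParam b (t + Real.pi) = -polarParam b t := by
  rw [polarParam, polarParam, expV_antiperiodic, norm_neg, smul_neg]

end Aux

section Aux2

lemma differentiableWithinAt_comp_add_const_Ici {f : ℝ → X} {a u : ℝ}
    (h : DifferentiableWithinAt ℝ f (Ici (u + a)) (u + a)) :
    DifferentiableWithinAt ℝ (fun x => f (x + a)) (Ici u) u := by
  have hh : HasDerivWithinAt (fun x : ℝ => x + a) 1 (Ici u) u :=
    (hasDerivWithinAt_id u _).add_const a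
  have hmap : MapsTo (fun x : ℝ => x + a) (Ici u) (Ici (u + a)) :=
    fun x hx => add_le_add_left (mem_Ici.1 hx) a
  exact (h.hasDerivWithinAt.scomp u hh hmap).differentiableWithinAt

lemma derivWithin_comp_add_const_Ici (f : ℝ → X) (a u : ℝ) :
    derivWithin (fun x => f (x + a)) (Ici u) u = derivWithin f (Ici (u + a)) (u + a) := by
  by_cases h : DifferentiableWithinAt ℝ f (Ici (u + a)) (u + a)
  · have hh : HasDerivWithinAt (fun x : ℝ => x + a) 1 (Ici u) u :=
      (hasDerivWithinAt_id u _).add_const a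
    have hmap : MapsTo (fun x : ℝ => x + a) (Ici u) (Ici (u + a)) :=
      fun x hx => add_le_add_left (mem_Ici.1 hx) a
    have := (h.hasDerivWithinAt.scomp u hh hmap)
    rw [one_smul] at this
    exact this.derivWithin (uniqueDiffOn_Ici u u self_mem_Ici)
  · have h2 : ¬ DifferentiableWithinAt ℝ (fun x => f (x + a)) (Ici u) u := by
      intro h2
      apply h
      have := differentiableWithinAt_comp_add_const_Ici (a := -a) (u := u + a)
        (f := fun x => f (x + a)) ?_
      · simpa using this
      · simpa using h2
    rw [derivWithin_zero_of_not_differentiableWithinAt h,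
      derivWithin_zero_of_not_differentiableWithinAt h2]

lemma derivWithin_neg_Ici (f : ℝ → X) (u : ℝ) :
    derivWithin (fun x => -f x) (Ici u) u = -derivWithin f (Ici u) u := by
  by_cases h : DifferentiableWithinAt ℝ f (Ici u) u
  · exact h.hasDerivWithinAt.neg.derivWithin (uniqueDiffOn_Ici u u self_mem_Ici)
  · have h2 : ¬ DifferentiableWithinAt ℝ (fun x => -f x) (Ici u) u := by
      intro h2; apply h; simpa using h2.neg
    rw [derivWithin_zero_of_not_differentiableWithinAt h,
      derivWithin_zero_of_not_differentiableWithinAt h2, neg_zero]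

variable (b : Module.Basis (Fin 2) ℝ X)

lemma rightDeriv_polar_antiperiodic (u : ℝ) :
    rightDeriv (polarParam b) (u + Real.pi) = -rightDeriv (polarParam b) u := by
  unfold rightDeriv
  rw [← derivWithin_comp_add_const_Ici (polarParam b) Real.pi u]
  have : (fun x => polarParam b (x + Real.pi)) = fun x => -polarParam b x := by
    funext x; exact polarParam_antiperiodic b x
  rw [this, derivWithin_neg_Ici]

lemma normRightDeriv_periodic :
    Function.Periodic (fun u => ‖rightDeriv (polarParam b) u‖) Real.pi := by
  intro u; simp only []; rw [rightDeriv_polar_antiperiodic, norm_neg]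

end Aux2
section Aux3

variable (b : Module.Basis (Fin 2) ℝ X)

lemma continuous_expV : Continuous (expV b) := by
  unfold expV; fun_prop

lemma continuous_normExpV : Continuous (fun t => ‖expV b t‖) :=
  (continuous_expV b).norm

lemma normExpV_periodic : Function.Periodic (fun t => ‖expV b t‖) Real.pi := by
  intro t; simp only []; rw [expV_antiperiodic, norm_neg]

/-- A positive uniform lower bound for `‖expV b t‖`. -/
lemma exists_norm_expV_lower : ∃ c : ℝ, 0 < c ∧ ∀ t : ℝ, c ≤ ‖expV b t‖ := by
  obtain ⟨t₀, ht₀, hmin⟩ := (isCompact_Icc : IsCompact (Icc (0:ℝ) Real.pi)).exists_isMinOn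
    (nonempty_Icc.2 Real.pi_pos.le) ((continuous_normExpV b).continuousOn)
  refine ⟨‖expV b t₀‖, norm_expV_pos b t₀, fun t => ?_⟩
  obtain ⟨y, hy, hfy⟩ := (normExpV_periodic b).exists_mem_Ico₀ Real.pi_pos t
  calc ‖expV b t₀‖ ≤ ‖expV b y‖ := hmin (Ico_subset_Icc_self hy)
    _ = ‖expV b t‖ := hfy.symm

lemma expV_lipschitz (s t : ℝ) :
    ‖expV b s - expV b t‖ ≤ (‖b 0‖ + ‖b 1‖) * |s - t| := by
  have h : expV b s - expV b t
      = (Real.cos s - Real.cos t) • b 0 + (Real.sin s - Real.sin t) • b 1 := by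
    simp only [expV, sub_smul]; abel
  rw [h]
  have habs : ∀ x y : ℝ, |Real.cos x - Real.cos y| ≤ |x - y| := by
    intro x y
    rw [Real.cos_sub_cos]
    have h1 : |Real.sin ((x - y) / 2)| ≤ |(x - y) / 2| := Real.abs_sin_le_abs
    have h2 : |Real.sin ((x + y) / 2)| ≤ 1 := Real.abs_sin_le_one _
    calc |(-2) * Real.sin ((x + y) / 2) * Real.sin ((x - y) / 2)|
        = 2 * |Real.sin ((x + y) / 2)| * |Real.sin ((x - y) / 2)| := by
          rw [abs_mul, abs_mul]; norm_num
      _ ≤ 2 * 1 * |(x - y) / 2| := by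
          apply mul_le_mul (by nlinarith [abs_nonneg (Real.sin ((x+y)/2))]) h1
            (abs_nonneg _) (by norm_num)
      _ = |x - y| := by rw [abs_div]; simp; ring
  have habs' : ∀ x y : ℝ, |Real.sin x - Real.sin y| ≤ |x - y| := by
    intro x y
    rw [Real.sin_sub_sin]
    have h1 : |Real.sin ((x - y) / 2)| ≤ |(x - y) / 2| := Real.abs_sin_le_abs
    have h2 : |Real.cos ((x + y) / 2)| ≤ 1 := Real.abs_cos_le_one _
    calc |2 * Real.sin ((x - y) / 2) * Real.cos ((x + y) / 2)|
        = 2 * |Real.sin ((x - y) / 2)| * |Real.cos ((x + y) / 2)| := by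
          rw [abs_mul, abs_mul]; norm_num
      _ ≤ 2 * |(x - y) / 2| * 1 := by
          apply mul_le_mul (by nlinarith [abs_nonneg (Real.sin ((x-y)/2))]) h2
            (abs_nonneg _) (by positivity)
      _ = |x - y| := by rw [abs_div]; simp; ring
  calc ‖(Real.cos s - Real.cos t) • b 0 + (Real.sin s - Real.sin t) • b 1‖
      ≤ ‖(Real.cos s - Real.cos t) • b 0‖ + ‖(Real.sin s - Real.sin t) • b 1‖ :=
        norm_add_le _ _
    _ = |Real.cos s - Real.cos t| * ‖b 0‖ + |Real.sin s - Real.sin t| * ‖b 1‖ := by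
        rw [norm_smul, norm_smul, Real.norm_eq_abs, Real.norm_eq_abs]
    _ ≤ |s - t| * ‖b 0‖ + |s - t| * ‖b 1‖ :=
        add_le_add (mul_le_mul_of_nonneg_right (habs s t) (norm_nonneg _))
          (mul_le_mul_of_nonneg_right (habs' s t) (norm_nonneg _))
    _ = (‖b 0‖ + ‖b 1‖) * |s - t| := by ring

end Aux3
section Aux4

/-- Chord estimate for normalization. -/
lemma normalize_sub_normalize_le {a c : X} (ha : a ≠ 0) (hc : c ≠ 0) :
    ‖‖a‖⁻¹ • a - ‖c‖⁻¹ • c‖ ≤ 2 / ‖a‖ * ‖a - c‖ := by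
  have hna : (0:ℝ) < ‖a‖ := norm_pos_iff.2 ha
  have hnc : (0:ℝ) < ‖c‖ := norm_pos_iff.2 hc
  have key : ‖a‖⁻¹ • a - ‖c‖⁻¹ • c = ‖a‖⁻¹ • (a - c) + (‖a‖⁻¹ - ‖c‖⁻¹) • c := by
    rw [smul_sub, sub_smul]; abel
  rw [key]
  have h1 : ‖‖a‖⁻¹ • (a - c)‖ = ‖a - c‖ / ‖a‖ := by
    rw [norm_smul, Real.norm_eq_abs, abs_of_pos (by positivity)]
    field_simp
  have h2 : ‖(‖a‖⁻¹ - ‖c‖⁻¹) • c‖ ≤ ‖a - c‖ / ‖a‖ := by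
    rw [norm_smul, Real.norm_eq_abs]
    have heq : ‖a‖⁻¹ - ‖c‖⁻¹ = (‖c‖ - ‖a‖) / (‖a‖ * ‖c‖) := by field_simp
    rw [heq, abs_div, abs_of_pos (show (0:ℝ) < ‖a‖ * ‖c‖ by positivity)]
    have hle : |‖c‖ - ‖a‖| ≤ ‖a - c‖ :=
      le_trans (abs_norm_sub_norm_le c a) (le_of_eq (norm_sub_rev c a))
    calc |‖c‖ - ‖a‖| / (‖a‖ * ‖c‖) * ‖c‖ = |‖c‖ - ‖a‖| / ‖a‖ := by field_simp
      _ ≤ ‖a - c‖ / ‖a‖ := by gcongr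
  calc ‖‖a‖⁻¹ • (a - c) + (‖a‖⁻¹ - ‖c‖⁻¹) • c‖
      ≤ ‖‖a‖⁻¹ • (a - c)‖ + ‖(‖a‖⁻¹ - ‖c‖⁻¹) • c‖ := norm_add_le _ _
    _ ≤ ‖a - c‖ / ‖a‖ + ‖a - c‖ / ‖a‖ := by rw [h1]; gcongr
    _ = 2 / ‖a‖ * ‖a - c‖ := by ring

variable (b : Module.Basis (Fin 2) ℝ X)

/-- A global Lipschitz bound for the polar parameterization. -/
lemma exists_lipschitz_polarParam :
    ∃ K : ℝ, 0 < K ∧ ∀ s t : ℝ, ‖polarParam b s - polarParam b t‖ ≤ K * |s - t| := by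
  obtain ⟨c, hc, hlow⟩ := exists_norm_expV_lower b
  refine ⟨2 / c * (‖b 0‖ + ‖b 1‖) + 1, by positivity, fun s t => ?_⟩
  have h1 : ‖polarParam b s - polarParam b t‖
      ≤ 2 / ‖expV b s‖ * ‖expV b s - expV b t‖ :=
    normalize_sub_normalize_le (expV_ne_zero b s) (expV_ne_zero b t)
  have h2 : 2 / ‖expV b s‖ ≤ 2 / c := by gcongr; exact hlow s
  calc ‖polarParam b s - polarParam b t‖
      ≤ 2 / ‖expV b s‖ * ‖expV b s - expV b t‖ := h1
    _ ≤ 2 / c * ((‖b 0‖ + ‖b 1‖) * |s - t|) := by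
        apply mul_le_mul h2 (expV_lipschitz b s t) (norm_nonneg _) (by positivity)
    _ ≤ (2 / c * (‖b 0‖ + ‖b 1‖) + 1) * |s - t| := by
        have := abs_nonneg (s - t); nlinarith [norm_nonneg (b 0), norm_nonneg (b 1),
          mul_nonneg (div_nonneg (by norm_num : (0:ℝ) ≤ 2) hc.le)
            (add_nonneg (norm_nonneg (b 0)) (norm_nonneg (b 1)))]

end Aux4
section Aux5

lemma norm_derivWithin_Ici_le {f : ℝ → X} {K : ℝ} (hK : 0 ≤ K)
    (hf : ∀ s t : ℝ, ‖f s - f t‖ ≤ K * |s - t|) (u : ℝ) :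
    ‖derivWithin f (Ici u) u‖ ≤ K := by
  by_cases h : DifferentiableWithinAt ℝ f (Ici u) u
  · have hd := h.hasDerivWithinAt
    rw [hasDerivWithinAt_iff_tendsto_slope] at hd
    have hIoi : (Ici u) \ {u} = Ioi u := by
      ext x; simp [Set.mem_diff, lt_iff_le_and_ne, eq_comm, and_comm]
    rw [hIoi] at hd
    have : Tendsto (fun x => ‖slope f u x‖) (𝓝[>] u) (𝓝 ‖derivWithin f (Ici u) u‖) :=
      hd.norm
    refine le_of_tendsto this ?_
    filter_upwards [self_mem_nhdsWithin] with x hx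
    have hxu : x ≠ u := ne_of_gt hx
    rw [slope_def_module, norm_smul, Real.norm_eq_abs, abs_inv]
    rw [inv_mul_le_iff₀ (by rwa [abs_pos, sub_ne_zero])]
    rw [mul_comm]; exact hf x u
  · rw [derivWithin_zero_of_not_differentiableWithinAt h, norm_zero]; exact hK

variable (b : Module.Basis (Fin 2) ℝ X)

lemma exists_bound_normRightDeriv :
    ∃ K : ℝ, 0 < K ∧ ∀ u : ℝ, ‖rightDeriv (polarParam b) u‖ ≤ K := by
  obtain ⟨K, hK, hlip⟩ := exists_lipschitz_polarParam b
  exact ⟨K, hK, fun u => norm_derivWithin_Ici_le hK.le hlip u⟩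

lemma measurable_normRightDeriv :
    Measurable (fun u => ‖rightDeriv (polarParam b) u‖) := by
  have : FiniteDimensional ℝ X := b.finiteDimensional_of_finite
  borelize X
  exact (measurable_derivWithin_Ici (polarParam b)).norm

lemma intervalIntegrable_normRightDeriv (a c : ℝ) :
    IntervalIntegrable (fun u => ‖rightDeriv (polarParam b) u‖) volume a c := by
  obtain ⟨K, hK, hbd⟩ := exists_bound_normRightDeriv b
  apply IntervalIntegrable.mono_fun' (g := fun _ => K) intervalIntegrable_const
  · exact ((measurable_normRightDeriv b).aestronglyMeasurable)
  · filter_upwards with u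
    rw [Real.norm_eq_abs, abs_of_nonneg (norm_nonneg _)]
    exact hbd u

end Aux5
section Aux6

variable (b : Module.Basis (Fin 2) ℝ X)

lemma coord_polarParam_zero (x : ℝ) :
    b.coord 0 (polarParam b x) = ‖expV b x‖⁻¹ * Real.cos x := by
  rw [polarParam, _root_.map_smul, coord_expV_zero]; rfl

lemma coord_polarParam_one (x : ℝ) :
    b.coord 1 (polarParam b x) = ‖expV b x‖⁻¹ * Real.sin x := by
  rw [polarParam, _root_.map_smul, coord_expV_one]; rfl

lemma deriv_polar_ne_zero (u : ℝ) (h : DifferentiableAt ℝ (polarParam b) u) :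
    deriv (polarParam b) u ≠ 0 := by
  have : FiniteDimensional ℝ X := b.finiteDimensional_of_finite
  intro h0
  set φ0 : X →L[ℝ] ℝ := LinearMap.toContinuousLinearMap (b.coord 0) with hφ0
  set φ1 : X →L[ℝ] ℝ := LinearMap.toContinuousLinearMap (b.coord 1) with hφ1
  have hp : HasDerivAt (polarParam b) 0 u := by
    have := h.hasDerivAt; rwa [h0] at this
  have hc0 : HasDerivAt (fun x => φ0 (polarParam b x)) 0 u := by
    have := φ0.hasFDerivAt.comp_hasDerivAt u hp
    rw [map_zero] at this; exact this
  have hc1 : HasDerivAt (fun x => φ1 (polarParam b x)) 0 u := by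
    have := φ1.hasFDerivAt.comp_hasDerivAt u hp
    rw [map_zero] at this; exact this
  have hk : HasDerivAt
      (fun x => -(φ0 (polarParam b x)) * Real.sin x + (φ1 (polarParam b x)) * Real.cos x)
      (-(0 * Real.sin u + (φ0 (polarParam b u)) * Real.cos u)
        + (0 * Real.cos u + (φ1 (polarParam b u)) * (-Real.sin u))) u := by
    have := ((hc0.mul (Real.hasDerivAt_sin u)).neg).add (hc1.mul (Real.hasDerivAt_cos u))
    convert this using 2 with x
    · rfl
    · rfl
    · simp only [Pi.add_apply, Pi.neg_apply, Pi.mul_apply]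
      ring
  have hkzero : (fun x => -(φ0 (polarParam b x)) * Real.sin x
      + (φ1 (polarParam b x)) * Real.cos x) = fun _ => (0:ℝ) := by
    funext x
    have e0 : φ0 (polarParam b x) = ‖expV b x‖⁻¹ * Real.cos x := coord_polarParam_zero b x
    have e1 : φ1 (polarParam b x) = ‖expV b x‖⁻¹ * Real.sin x := coord_polarParam_one b x
    rw [e0, e1]; ring
  have hk0 : HasDerivAt (fun x => -(φ0 (polarParam b x)) * Real.sin x
      + (φ1 (polarParam b x)) * Real.cos x) 0 u := by
    rw [hkzero]; exact hasDerivAt_const u 0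
  have := hk.unique hk0
  have e0 : φ0 (polarParam b u) = ‖expV b u‖⁻¹ * Real.cos u := coord_polarParam_zero b u
  have e1 : φ1 (polarParam b u) = ‖expV b u‖⁻¹ * Real.sin u := coord_polarParam_one b u
  rw [e0, e1] at this
  have hsum : Real.cos u ^ 2 + Real.sin u ^ 2 = 1 := Real.cos_sq_add_sin_sq u
  have hinv : (0:ℝ) < ‖expV b u‖⁻¹ := by
    exact inv_pos.2 (norm_expV_pos b u)
  nlinarith [this, hinv]

lemma ae_pos_normRightDeriv :
    ∀ᵐ u : ℝ, 0 < ‖rightDeriv (polarParam b) u‖ := by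
  have : FiniteDimensional ℝ X := b.finiteDimensional_of_finite
  obtain ⟨K, hK, hlip⟩ := exists_lipschitz_polarParam b
  have hlw : LipschitzWith (Real.toNNReal K) (polarParam b) := by
    apply LipschitzWith.of_dist_le_mul
    intro x y
    rw [dist_eq_norm, Real.dist_eq, Real.coe_toNNReal K hK.le]
    exact hlip x y
  filter_upwards [hlw.ae_differentiableAt (μ := volume)] with u hu
  have heq : rightDeriv (polarParam b) u = deriv (polarParam b) u := by
    rw [rightDeriv]
    exact hu.derivWithin (uniqueDiffOn_Ici u u self_mem_Ici)
  rw [heq, norm_pos_iff]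
  exact deriv_polar_ne_zero b u hu

end Aux6
section Aux7

variable (b : Module.Basis (Fin 2) ℝ X)

lemma arcLen_sub (a c : ℝ) :
    arcLen b c - arcLen b a = ∫ u in a..c, ‖rightDeriv (polarParam b) u‖ := by
  have h := intervalIntegral.integral_add_adjacent_intervals
    (intervalIntegrable_normRightDeriv b 0 a) (intervalIntegrable_normRightDeriv b a c)
  unfold arcLen
  linarith [h]

lemma arcLen_strictMono : StrictMono (arcLen b) := by
  intro a c hac
  have h := arcLen_sub b a c
  have hpos : 0 < ∫ u in a..c, ‖rightDeriv (polarParam b) u‖ := by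
    rw [intervalIntegral.integral_pos_iff_support_of_nonneg_ae
      (Filter.Eventually.of_forall (fun u => norm_nonneg _))
      (intervalIntegrable_normRightDeriv b a c)]
    refine ⟨hac, ?_⟩
    have hsupp : ∀ᵐ u : ℝ, u ∈ Function.support (fun u => ‖rightDeriv (polarParam b) u‖) := by
      filter_upwards [ae_pos_normRightDeriv b] with u hu
      exact ne_of_gt hu
    have : (Function.support (fun u => ‖rightDeriv (polarParam b) u‖) ∩ Ioc a c : Set ℝ)
        =ᵐ[volume] (Ioc a c : Set ℝ) := by
      apply Filter.eventuallyEq_of_mem hsupp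
      intro u hu
      change Function.support (fun u => ‖rightDeriv (polarParam b) u‖) u at hu
      show ((Function.support fun u => ‖rightDeriv (polarParam b) u‖) ∩ Ioc a c) u = Ioc a c u
      simp only [eq_iff_iff]
      constructor
      · rintro ⟨-, h2⟩; exact h2
      · intro h2; exact ⟨hu, h2⟩
    rw [measure_congr this]
    simp [hac]
  linarith

lemma arcLen_lipschitz_bound : ∃ K : ℝ, 0 < K ∧
    ∀ a c : ℝ, |arcLen b c - arcLen b a| ≤ K * |c - a| := by
  obtain ⟨K, hK, hbd⟩ := exists_bound_normRightDeriv b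
  refine ⟨K, hK, fun a c => ?_⟩
  rw [arcLen_sub]
  have h' : ∀ x ∈ Set.uIoc a c, ‖‖rightDeriv (polarParam b) x‖‖ ≤ K := by
    intro x _
    rw [Real.norm_eq_abs, abs_of_nonneg (norm_nonneg _)]
    exact hbd x
  have := intervalIntegral.norm_integral_le_of_norm_le_const h'
  rwa [Real.norm_eq_abs] at this

lemma arcLen_add_pi (t : ℝ) : arcLen b (t + Real.pi) = arcLen b t + halfLen b := by
  have h1 : arcLen b (t + Real.pi) - arcLen b t
      = ∫ u in t..(t + Real.pi), ‖rightDeriv (polarParam b) u‖ := arcLen_sub b t _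
  have h2 := (normRightDeriv_periodic b).intervalIntegral_add_eq t 0
  rw [zero_add] at h2
  have h3 : halfLen b = ∫ u in (0:ℝ)..Real.pi, ‖rightDeriv (polarParam b) u‖ := rfl
  rw [h2] at h1
  rw [← h3] at h1
  linarith

lemma halfLen_pos : 0 < halfLen b := by
  have := arcLen_strictMono b (show (0:ℝ) < Real.pi from Real.pi_pos)
  have h0 : arcLen b 0 = 0 := by unfold arcLen; simp
  unfold halfLen; linarith [this, h0]

lemma arcLen_continuous : Continuous (arcLen b) :=
  intervalIntegral.continuous_primitive (fun a c => intervalIntegrable_normRightDeriv b a c) 0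

lemma arcLen_surjective : Function.Surjective (arcLen b) := by
  have hmono := (arcLen_strictMono b).monotone
  have hiter : ∀ n : ℕ, ∀ t : ℝ, arcLen b (t + n * Real.pi) = arcLen b t + n * halfLen b := by
    intro n
    induction n with
    | zero => simp
    | succ m ih =>
      intro t
      have h : (t + ((m:ℝ) + 1) * Real.pi) = (t + (m:ℝ) * Real.pi) + Real.pi := by ring
      push_cast [h]
      rw [arcLen_add_pi, ih]
      ring
  apply Continuous.surjective (arcLen_continuous b)
  · apply Monotone.tendsto_atTop_atTop hmono
    intro y
    obtain ⟨n, hn⟩ := exists_nat_ge ((y - arcLen b 0) / halfLen b)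
    refine ⟨0 + n * Real.pi, ?_⟩
    rw [hiter n 0]
    have hL := halfLen_pos b
    rw [div_le_iff₀ hL] at hn
    linarith
  · apply Monotone.tendsto_atBot_atBot hmono
    intro y
    obtain ⟨n, hn⟩ := exists_nat_ge ((arcLen b 0 - y) / halfLen b)
    refine ⟨0 - n * Real.pi, ?_⟩
    have h := hiter n (0 - n * Real.pi)
    have hL := halfLen_pos b
    rw [div_le_iff₀ hL] at hn
    have : (0 - n * Real.pi) + n * Real.pi = 0 := by ring
    rw [this] at h
    linarith

end Aux7
section Aux8

variable (b : Module.Basis (Fin 2) ℝ X)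

lemma arcLen_arcInv (y : ℝ) : arcLen b (arcInv b y) = y :=
  Function.invFun_eq (arcLen_surjective b y)

lemma arcInv_arcLen (t : ℝ) : arcInv b (arcLen b t) = t :=
  Function.leftInverse_invFun (arcLen_strictMono b).injective t

lemma arcInv_strictMono : StrictMono (arcInv b) := by
  intro y1 y2 h
  by_contra hle
  push_neg at hle
  have := (arcLen_strictMono b).monotone hle
  rw [arcLen_arcInv, arcLen_arcInv] at this
  linarith

lemma arcInv_surjective : Function.Surjective (arcInv b) :=
  fun t => ⟨arcLen b t, arcInv_arcLen b t⟩

lemma arcInv_continuous : Continuous (arcInv b) :=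
  (arcInv_strictMono b).monotone.continuous_of_surjective (arcInv_surjective b)

lemma arcInv_add_halfLen (y : ℝ) : arcInv b (y + halfLen b) = arcInv b y + Real.pi := by
  apply (arcLen_strictMono b).injective
  rw [arcLen_arcInv, arcLen_add_pi, arcLen_arcInv]

lemma natParam_antiperiodic (x : ℝ) : natParam b (x + halfLen b) = -natParam b x := by
  unfold natParam
  simp only [Function.comp_apply]
  rw [arcInv_add_halfLen, polarParam_antiperiodic]

lemma norm_natParam (x : ℝ) : ‖natParam b x‖ = 1 := norm_polarParam b _

end Aux8
section Aux9

variable (b : Module.Basis (Fin 2) ℝ X)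

lemma norm_expV_le (t : ℝ) : ‖expV b t‖ ≤ ‖b 0‖ + ‖b 1‖ := by
  unfold expV
  calc ‖Real.cos t • b 0 + Real.sin t • b 1‖
      ≤ ‖Real.cos t • b 0‖ + ‖Real.sin t • b 1‖ := norm_add_le _ _
    _ = |Real.cos t| * ‖b 0‖ + |Real.sin t| * ‖b 1‖ := by
        rw [norm_smul, norm_smul, Real.norm_eq_abs, Real.norm_eq_abs]
    _ ≤ 1 * ‖b 0‖ + 1 * ‖b 1‖ := by
        gcongr
        exacts [Real.abs_cos_le_one t, Real.abs_sin_le_one t]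
    _ = ‖b 0‖ + ‖b 1‖ := by ring

lemma coord_natParam_zero (x : ℝ) :
    b.coord 0 (natParam b x) = ‖expV b (arcInv b x)‖⁻¹ * Real.cos (arcInv b x) :=
  coord_polarParam_zero b _

lemma coord_natParam_one (x : ℝ) :
    b.coord 1 (natParam b x) = ‖expV b (arcInv b x)‖⁻¹ * Real.sin (arcInv b x) :=
  coord_polarParam_one b _

lemma W_deriv_pos (s : ℝ) (hd1 : DifferentiableAt ℝ (natParam b) s) :
    0 < b.coord 0 (natParam b s) * b.coord 1 (deriv (natParam b) s)
      - b.coord 1 (natParam b s) * b.coord 0 (deriv (natParam b) s) := by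
  have : FiniteDimensional ℝ X := b.finiteDimensional_of_finite
  set t0 := arcInv b s with ht0
  set φ0 : X →L[ℝ] ℝ := LinearMap.toContinuousLinearMap (b.coord 0) with hφ0
  set φ1 : X →L[ℝ] ℝ := LinearMap.toContinuousLinearMap (b.coord 1) with hφ1
  set W : X →L[ℝ] ℝ := (b.coord 0 (natParam b s)) • φ1 - (b.coord 1 (natParam b s)) • φ0
    with hW
  have hWapp : ∀ v : X, W v = b.coord 0 (natParam b s) * b.coord 1 v
      - b.coord 1 (natParam b s) * b.coord 0 v := by
    intro v
    simp [hW, hφ0, hφ1]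
  -- ψ and its derivative
  have hψ : HasDerivAt (fun x => W (natParam b x)) (W (deriv (natParam b) s)) s := by
    have := W.hasFDerivAt.comp_hasDerivAt s hd1.hasDerivAt
    exact this
  -- value formula for ψ
  have hψval : ∀ x : ℝ, W (natParam b x)
      = ‖expV b t0‖⁻¹ * ‖expV b (arcInv b x)‖⁻¹ * Real.sin (arcInv b x - t0) := by
    intro x
    rw [hWapp, coord_natParam_zero, coord_natParam_one, coord_natParam_zero,
      coord_natParam_one, Real.sin_sub, ← ht0]
    ring
  have hψs : W (natParam b s) = 0 := by
    rw [hψval s]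
    simp [← ht0]
  -- constants
  obtain ⟨K, hK, hKlip⟩ := arcLen_lipschitz_bound b
  set C0 : ℝ := ‖b 0‖ + ‖b 1‖ with hC0def
  have hC0 : 0 < C0 := by
    have := b.ne_zero 0
    have h0 : 0 < ‖b 0‖ := norm_pos_iff.2 this
    have h1 : 0 ≤ ‖b 1‖ := norm_nonneg _
    linarith
  set α : ℝ := 2 / Real.pi * (C0⁻¹ * C0⁻¹) * K⁻¹ with hα
  have hαpos : 0 < α := by
    have := Real.pi_pos
    positivity
  -- eventual slope bound
  have hev : ∀ᶠ x in 𝓝[>] s, α ≤ slope (fun x => W (natParam b x)) s x := by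
    have hcont : Tendsto (arcInv b) (𝓝 s) (𝓝 t0) := (arcInv_continuous b).continuousAt
    have hev1 : ∀ᶠ x in 𝓝 s, arcInv b x < t0 + Real.pi / 2 :=
      hcont (Iio_mem_nhds (by linarith [Real.pi_pos]))
    filter_upwards [nhdsWithin_le_nhds hev1, self_mem_nhdsWithin] with x hx1 hx2
    have hsx : s < x := hx2
    set δ : ℝ := arcInv b x - t0 with hδ
    have hδpos : 0 < δ := by
      have := arcInv_strictMono b hsx
      simp only [hδ]; linarith
    have hδle : δ ≤ Real.pi / 2 := by simp only [hδ]; linarith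
    have hxs : x - s ≤ K * δ := by
      have h := hKlip t0 (arcInv b x)
      rw [arcLen_arcInv, ht0, arcLen_arcInv] at h
      calc x - s ≤ |x - s| := le_abs_self _
        _ ≤ K * |arcInv b x - arcInv b s| := by rw [← ht0] at h ⊢; exact h
        _ = K * δ := by rw [← ht0, ← hδ, abs_of_pos hδpos]
    have hsin : 2 / Real.pi * δ ≤ Real.sin δ := Real.mul_le_sin hδpos.le hδle
    have hsinpos : 0 ≤ Real.sin δ := le_trans (by positivity) hsin
    have hn0 : C0⁻¹ ≤ ‖expV b t0‖⁻¹ := by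
      apply inv_anti₀ (norm_expV_pos b t0) (norm_expV_le b t0)
    have hnx : C0⁻¹ ≤ ‖expV b (arcInv b x)‖⁻¹ := by
      apply inv_anti₀ (norm_expV_pos b _) (norm_expV_le b _)
    have hψx : C0⁻¹ * C0⁻¹ * Real.sin δ ≤ W (natParam b x) := by
      rw [hψval x, ← hδ]
      apply mul_le_mul _ le_rfl hsinpos _
      · apply mul_le_mul hn0 hnx (by positivity) (by positivity)
      · positivity
    have hslope : slope (fun x => W (natParam b x)) s x
        = (W (natParam b x) - W (natParam b s)) / (x - s) := by
      rw [slope_def_field]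
    rw [hslope, hψs, sub_zero, le_div_iff₀ (by linarith)]
    calc α * (x - s) ≤ α * (K * δ) := by
          apply mul_le_mul_of_nonneg_left hxs hαpos.le
      _ = C0⁻¹ * C0⁻¹ * (2 / Real.pi * δ) * (K⁻¹ * K) := by rw [hα]; ring
      _ = C0⁻¹ * C0⁻¹ * (2 / Real.pi * δ) := by
          rw [inv_mul_cancel₀ hK.ne']; ring
      _ ≤ C0⁻¹ * C0⁻¹ * Real.sin δ := by
          apply mul_le_mul_of_nonneg_left hsin (by positivity)
      _ ≤ W (natParam b x) := hψx
  -- conclude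
  have hslope_t := hasDerivAt_iff_tendsto_slope.1 hψ
  have hle : (𝓝[>] s : Filter ℝ) ≤ 𝓝[≠] s :=
    nhdsWithin_mono s (fun x hx => ne_of_gt hx)
  have hW' : α ≤ W (deriv (natParam b) s) :=
    ge_of_tendsto (hslope_t.mono_left hle) hev
  have := hWapp (deriv (natParam b) s)
  linarith
end Aux9

set_option linter.unusedSectionVars false
set_option linter.unusedVariables false

/-- The radial and tangential curvatures are `L`-periodic. -/
theorem curvatures_periodic [CompleteSpace X] (b : Module.Basis (Fin 2) ℝ X)
    (s : ℝ) (g₁ g₂ : X) (ρ₁ τ₁ ρ₂ τ₂ : ℝ)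
    (hd1 : DifferentiableAt ℝ (natParam b) s)
    (hd2 : DifferentiableAt ℝ (natParam b) (s + halfLen b))
    (h1 : HasDerivAt (deriv (natParam b)) g₁ s)
    (h2 : HasDerivAt (deriv (natParam b)) g₂ (s + halfLen b))
    (e1 : g₁ = (-ρ₁) • natParam b s + τ₁ • deriv (natParam b) s)
    (e2 : g₂ = (-ρ₂) • natParam b (s + halfLen b) + τ₂ • deriv (natParam b) (s + halfLen b)) :
    ρ₂ = ρ₁ ∧ τ₂ = τ₁ := by
  have hfd : FiniteDimensional ℝ X := b.finiteDimensional_of_finite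
  set L : ℝ := halfLen b with hL
  set F : ℝ → X := natParam b with hFdef
  have hFanti : ∀ y, F (y + L) = -F y := fun y => natParam_antiperiodic b y
  have hFeq : F = fun y => -F (y - L) := by
    funext y
    have h := hFanti (y - L)
    rw [sub_add_cancel] at h
    exact h
  have hderiv_anti : ∀ y : ℝ, deriv F (y + L) = -deriv F y := by
    intro y
    conv_lhs => rw [hFeq]
    rw [show (fun y => -F (y - L)) = fun y => -(fun z => F (z - L)) y from rfl,
      deriv.fun_neg, deriv_comp_sub_const, add_sub_cancel_right]
  -- second derivative antiperiodicity
  have hGfun : (fun x => deriv F (x + L)) = fun x => -deriv F x := funext hderiv_anti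
  have h2' : HasDerivAt (fun x => deriv F (x + L)) g₂ s := h2.comp_add_const s L
  rw [hGfun] at h2'
  have h2'' : HasDerivAt (deriv F) (-g₂) s := by simpa [Pi.neg_def] using h2'.neg
  have hg : g₁ = -g₂ := h1.unique h2''
  -- the vector equation
  have hR : F (s + L) = -F s := hFanti s
  have hG : deriv F (s + L) = -deriv F s := hderiv_anti s
  have h := hg
  rw [e1, e2, hR, hG] at h
  have key : (τ₁ - τ₂) • deriv F s = (ρ₁ - ρ₂) • F s := by
    have h' : (-ρ₁) • F s + τ₁ • deriv F s = (-ρ₂) • F s + τ₂ • deriv F s := by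
      rw [h]; module
    linear_combination (norm := module) h'
  -- apply coordinates
  set c0 : ℝ := b.coord 0 (F s) with hc0
  set c1 : ℝ := b.coord 1 (F s) with hc1
  set d0 : ℝ := b.coord 0 (deriv F s) with hd0
  set d1 : ℝ := b.coord 1 (deriv F s) with hd1'
  have hA : (τ₁ - τ₂) * d0 = (ρ₁ - ρ₂) * c0 := by
    have := congrArg (b.coord 0) key
    simpa [_root_.map_smul, smul_eq_mul, hc0, hd0, hc1, hd1'] using this
  have hB : (τ₁ - τ₂) * d1 = (ρ₁ - ρ₂) * c1 := by
    have := congrArg (b.coord 1) key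
    simpa [_root_.map_smul, smul_eq_mul, hc0, hd0, hc1, hd1'] using this
  have hw : 0 < c0 * d1 - c1 * d0 := W_deriv_pos b s hd1
  have hτ : τ₁ - τ₂ = 0 := by
    have hzero : (τ₁ - τ₂) * (c0 * d1 - c1 * d0) = 0 := by
      linear_combination c0 * hB - c1 * hA
    rcases mul_eq_zero.1 hzero with h' | h'
    · exact h'
    · exact absurd h' (ne_of_gt hw)
  have hρ : ρ₁ - ρ₂ = 0 := by
    rw [hτ, zero_smul] at key
    have hFs : F s ≠ 0 := by
      intro h0
      have := norm_natParam b s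
      rw [← hFdef, h0, norm_zero] at this
      norm_num at this
    rcases smul_eq_zero.1 key.symm with h' | h'
    · exact h'
    · exact absurd h' hFs
  constructor <;> [linarith; linarith]


end
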